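/- Let q be a prime power, m ≥ 2, and let S ⊆ F_q^* have size q-1-m such that T = F_q^* \ S is contained in a coset γH of a proper multiplicative subgroup H of F_q^* of order d. Then P(X) = \prod_{a ∈ S}(X-a) factors as P(X) = (\sum_{j=1}^{(q-1)/d} c_j X^{(q-1)-jd}) · U(X), where the c_j are elements of F_q and U(X) is a product of d-m pairwise different linear factors X - x with x in F_q^*. -/

import Mathlib

open Polynomial Finset

section helpers
variable {F : Type*} [Field F]

lemma my_eq_prod_X_sub_C (s : Finset F) (p : F[X])
    (hmon : p.Monic) (hdeg : p.natDegree = s.card) (hr : ∀ x ∈ s, p.eval x = 0) :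
    p = ∏ x ∈ s, (X - C x) := by
  classical
  have hp0 : p ≠ 0 := hmon.ne_zero
  have hle : s.val ≤ p.roots := by
    refine Multiset.le_iff_count.2 fun a => ?_
    by_cases ha : a ∈ s
    · have h1 : s.val.count a = 1 := Multiset.count_eq_one_of_mem s.nodup ha
      rw [h1, Polynomial.count_roots]
      exact (Polynomial.rootMultiplicity_pos hp0).2 (hr a ha)
    · rw [Multiset.count_eq_zero_of_notMem ha]
      exact Nat.zero_le _
  have hdvd : (∏ x ∈ s, (X - C x)) ∣ p :=
    (Multiset.prod_X_sub_C_dvd_iff_le_roots hp0 s.val).2 hle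
  obtain ⟨u, hu⟩ := hdvd
  have hpm : (∏ x ∈ s, (X - C x)).Monic :=
    monic_prod_of_monic _ _ fun x _ => monic_X_sub_C x
  have hpd : (∏ x ∈ s, (X - C x)).natDegree = s.card := by
    rw [Polynomial.natDegree_prod _ _ fun x _ => (monic_X_sub_C x).ne_zero]
    simp
  have hu0 : u ≠ 0 := by rintro rfl; simp [hu] at hp0
  have hud : u.natDegree = 0 := by
    have := Polynomial.natDegree_mul (hpm.ne_zero) hu0
    rw [← hu, hdeg, hpd] at this
    omega
  have hul : u = C (u.coeff 0) := Polynomial.eq_C_of_natDegree_eq_zero hud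
  have hlc : u.coeff 0 = 1 := by
    have h1 : p.leadingCoeff = 1 := hmon
    rw [hu, Polynomial.leadingCoeff_mul, hpm.leadingCoeff, one_mul] at h1
    rwa [Polynomial.leadingCoeff, hud] at h1
  rw [hu, hul, hlc, map_one, mul_one]

lemma my_geom {R : Type*} [CommRing R] (g : R) (d : ℕ) : ∀ e : ℕ,
    (∑ j ∈ Finset.Icc 1 e, C (g ^ (j - 1)) * X ^ (d * e - j * d)) * (X ^ d - C g)
      = X ^ (d * e) - C (g ^ e) := by
  intro e
  induction e with
  | zero => simp
  | succ e ih =>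
    rw [Finset.sum_Icc_succ_top (by omega : 1 ≤ e + 1)]
    have hs : ∀ j ∈ Finset.Icc 1 e,
        C (g ^ (j - 1)) * (X : R[X]) ^ (d * (e + 1) - j * d)
          = X ^ d * (C (g ^ (j - 1)) * X ^ (d * e - j * d)) := by
      intro j hj
      rw [Finset.mem_Icc] at hj
      have h1 : j * d ≤ d * e := by
        calc j * d ≤ e * d := Nat.mul_le_mul_right _ hj.2
        _ = d * e := Nat.mul_comm _ _
      have h3 : d * (e + 1) = d * e + d := by ring
      have h2 : d * (e + 1) - j * d = (d * e - j * d) + d := by omega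
      rw [h2, pow_add]; ring
    rw [Finset.sum_congr rfl hs, ← Finset.mul_sum]
    have h4 : d * (e + 1) - (e + 1) * d = 0 := by
      have : d * (e + 1) = (e + 1) * d := mul_comm _ _
      omega
    have h5 : e + 1 - 1 = e := rfl
    rw [h4, h5, pow_zero, mul_one, add_mul, mul_assoc, ih]
    have h6 : d * (e + 1) = d * e + d := by ring
    rw [h6, pow_add, pow_succ, map_mul]
    ring

end helpers

/-- **Factorization (from the proof of Proposition 1).** Let `S ⊆ F_q^*` with
`|S| = q-1-m`, `m ≥ 2`, such that `T = F_q^* \ S` is contained in a coset `γH` of a proper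
multiplicative subgroup `H ≤ F_q^*` of order `d`. Then
`P(X) = ∏_{a ∈ S}(X-a) = (∑_{j=1}^{(q-1)/d} c_j X^{(q-1)-jd}) · U(X)` where the `c_j ∈ F_q`
and `U(X)` is a product of `d-m` pairwise different linear factors `X - x` with `x ∈ F_q^*`. -/
theorem factorization_of_complement_in_coset
    {F : Type*} [Field F] [Fintype F] {q m d : ℕ} (hq : Fintype.card F = q)
    (hm : 2 ≤ m) (S : Finset F) (hS0 : (0 : F) ∉ S) (hcard : S.card = q - 1 - m)
    (γ : Fˣ) (H : Subgroup Fˣ) (hH : H ≠ ⊤) (hd : Nat.card H = d)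
    (hT : ∀ x : Fˣ, (x : F) ∉ S → ∃ h ∈ H, x = γ * h)
    (P : Polynomial F) (hP : P = ∏ a ∈ S, (Polynomial.X - Polynomial.C a)) :
    ∃ (c : ℕ → F) (B : Finset F), (0 : F) ∉ B ∧ B.card = d - m ∧
      P = (∑ j ∈ Finset.Icc 1 ((q - 1) / d), Polynomial.C (c j) * Polynomial.X ^ (q - 1 - j * d)) *
        ∏ x ∈ B, (Polynomial.X - Polynomial.C x) := by
  classical
  subst hq
  set q := Fintype.card F with hq
  have hq2 : 2 ≤ q := Fintype.one_lt_card
  have hcardu : Nat.card Fˣ = q - 1 := by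
    rw [Nat.card_eq_fintype_card, Fintype.card_units]
  -- facts about d
  have hdvd : d ∣ q - 1 := by
    rw [← hd, ← hcardu]; exact Subgroup.card_subgroup_dvd_card H
  have hd1 : 1 ≤ d := by
    rw [← hd]; exact Nat.card_pos
  have hdlt : d < q - 1 := by
    rcases lt_or_eq_of_le (Nat.le_of_dvd (by omega) hdvd) with h | h
    · exact h
    · exfalso
      exact hH (Subgroup.eq_top_of_card_eq H (by rw [hd, h, hcardu]))
  set e := (q - 1) / d with he
  have hde : d * e = q - 1 := Nat.mul_div_cancel' hdvd
  -- the coset as a finset of F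
  set Cs : Finset F := Finset.image (fun h : Fˣ => ((γ * h : Fˣ) : F)) (H : Set Fˣ).toFinset
    with hCs
  have hCscard : Cs.card = d := by
    rw [hCs, Finset.card_image_of_injective _ (by
      intro a b hab
      exact mul_left_cancel (Units.ext hab)), Set.toFinset_card, ← Nat.card_eq_fintype_card]
    exact hd
  have hCs0 : ∀ x ∈ Cs, x ≠ 0 := by
    intro x hx
    rw [hCs, Finset.mem_image] at hx
    obtain ⟨h, _, rfl⟩ := hx
    exact Units.ne_zero _
  have hCspow : ∀ x ∈ Cs, x ^ d = ((γ : F)) ^ d := by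
    intro x hx
    rw [hCs, Finset.mem_image] at hx
    obtain ⟨h, hh, rfl⟩ := hx
    rw [Set.mem_toFinset] at hh
    have hhp : (h : Fˣ) ^ d = 1 := by
      have h1 : (⟨h, hh⟩ : H) ^ d = 1 := by rw [← hd]; exact pow_card_eq_one'
      have h2 := congrArg (Subgroup.subtype H) h1
      simpa using h2
    have hhpF : ((h : Fˣ) : F) ^ d = 1 := by
      rw [← Units.val_pow_eq_pow_val, hhp, Units.val_one]
    push_cast
    rw [mul_pow, hhpF, mul_one]
  -- the set of nonzero elements
  set A : Finset F := Finset.univ.erase 0 with hA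
  have hAcard : A.card = q - 1 := by
    rw [hA, Finset.card_erase_of_mem (Finset.mem_univ 0), Finset.card_univ]
  have hSA : S ⊆ A := by
    intro x hx
    rw [hA, Finset.mem_erase]
    exact ⟨fun h => hS0 (h ▸ hx), Finset.mem_univ x⟩
  set T : Finset F := A \ S with hTdef
  have hTsub : T ⊆ Cs := by
    intro x hx
    rw [hTdef, Finset.mem_sdiff, hA, Finset.mem_erase] at hx
    obtain ⟨⟨hx0, _⟩, hxS⟩ := hx
    obtain ⟨h, hh, hxe⟩ := hT (Units.mk0 x hx0) (by simpa using hxS)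
    rw [hCs, Finset.mem_image]
    refine ⟨h, Set.mem_toFinset.2 hh, ?_⟩
    rw [← hxe]; rfl
  have hTcard : T.card = m := by
    have h1 : T.card = (q - 1) - S.card := by
      rw [hTdef, Finset.card_sdiff_of_subset hSA, hAcard]
    have h2 : T.card ≤ d := le_trans (Finset.card_le_card hTsub) (le_of_eq hCscard)
    rw [hcard] at h1
    omega
  have hmd : m ≤ d := hTcard ▸ le_trans (Finset.card_le_card hTsub) (le_of_eq hCscard)
  set B : Finset F := Cs \ T with hBdef
  have hBcard : B.card = d - m := by
    rw [hBdef, Finset.card_sdiff_of_subset hTsub, hCscard, hTcard]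
  have hB0 : (0 : F) ∉ B := fun h => hCs0 0 (Finset.sdiff_subset h) rfl
  -- product over A
  have hprodA : (X : F[X]) ^ (q - 1) - 1 = ∏ x ∈ A, (X - C x) := by
    have := my_eq_prod_X_sub_C A ((X : F[X]) ^ (q - 1) - C 1) ?_ ?_ ?_
    · rwa [map_one] at this
    · exact monic_X_pow_sub_C 1 (by omega)
    · rw [natDegree_X_pow_sub_C, hAcard]
    · intro x hx
      rw [hA, Finset.mem_erase] at hx
      simpa [sub_eq_zero] using FiniteField.pow_card_sub_one_eq_one x hx.1
  -- product over Cs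
  have hprodC : (X : F[X]) ^ d - C ((γ : F) ^ d) = ∏ x ∈ Cs, (X - C x) := by
    refine my_eq_prod_X_sub_C Cs _ (monic_X_pow_sub_C _ (by omega)) ?_ ?_
    · rw [natDegree_X_pow_sub_C, hCscard]
    · intro x hx
      simp [hCspow x hx]
  -- geometric factorization
  have hgeo : (∑ j ∈ Finset.Icc 1 e, C (((γ : F) ^ d) ^ (j - 1)) * X ^ (q - 1 - j * d)) *
      ((X : F[X]) ^ d - C ((γ : F) ^ d)) = X ^ (q - 1) - 1 := by
    have hg1 : ((γ : F) ^ d) ^ e = 1 := by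
      rw [← pow_mul, hde]
      exact FiniteField.pow_card_sub_one_eq_one _ (Units.ne_zero γ)
    have := my_geom ((γ : F) ^ d) d e
    rw [hg1, map_one, hde] at this
    exact this
  -- assemble
  have hsplitA : (∏ x ∈ T, (X - C x)) * ∏ x ∈ S, (X - C x) = ∏ x ∈ A, (X - C x) :=
    Finset.prod_sdiff hSA
  have hsplitC : (∏ x ∈ B, (X - C x)) * ∏ x ∈ T, (X - C x) = ∏ x ∈ Cs, (X - C x) :=
    Finset.prod_sdiff hTsub
  refine ⟨fun j => ((γ : F) ^ d) ^ (j - 1), B, hB0, hBcard, ?_⟩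
  have hTne : (∏ x ∈ T, (X - C x)) ≠ 0 :=
    (monic_prod_of_monic _ _ fun x _ => monic_X_sub_C x).ne_zero
  apply mul_right_cancel₀ hTne
  calc P * ∏ x ∈ T, (X - C x)
      = (∏ x ∈ T, (X - C x)) * ∏ x ∈ S, (X - C x) := by rw [hP]; ring
    _ = ∏ x ∈ A, (X - C x) := hsplitA
    _ = X ^ (q - 1) - 1 := hprodA.symm
    _ = (∑ j ∈ Finset.Icc 1 e, C (((γ : F) ^ d) ^ (j - 1)) * X ^ (q - 1 - j * d)) *
        ((X : F[X]) ^ d - C ((γ : F) ^ d)) := hgeo.symm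
    _ = (∑ j ∈ Finset.Icc 1 e, C (((γ : F) ^ d) ^ (j - 1)) * X ^ (q - 1 - j * d)) *
        ((∏ x ∈ B, (X - C x)) * ∏ x ∈ T, (X - C x)) := by rw [hprodC, ← hsplitC]
    _ = ((∑ j ∈ Finset.Icc 1 e, C (((γ : F) ^ d) ^ (j - 1)) * X ^ (q - 1 - j * d)) *
        ∏ x ∈ B, (X - C x)) * ∏ x ∈ T, (X - C x) := by ring
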